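/- Let A ∈ {0,1}^{n×n} be the adjacency matrix of a finite graph in which every node has positive degree, D its degree matrix, X ∈ ℝ^{n×d}, W₁ ∈ ℝ^{d×d'}, and W₂ ∈ ℝ^{d'×d'} entrywise nonnegative with every column sum strictly less than 1. Then for any initial matrix X^{(0)} ∈ ℝ^{n×d'}, the iteration X^{(t+1)} = X W₁ + D^{-1} A X^{(t)} W₂ converges (entrywise, as t → ∞) to the unique fixed point X̃ of the equation X̃ = X W₁ + D^{-1} A X̃ W₂. -/

import Mathlib

open Matrix BigOperators Filter Topology

attribute [local instance] Matrix.normedAddCommGroup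

/-- Under the convergence conditions on `W₂`, the iteration
`X^{(t+1)} = X W₁ + D⁻¹ A X^{(t)} W₂` converges entrywise, from any initial matrix,
to the unique fixed point of the feature propagation equation. -/
theorem feature_propagation_iteration_converges
    {n d d' : ℕ}
    (A : Matrix (Fin n) (Fin n) ℝ)
    (hA01 : ∀ i j, A i j = 0 ∨ A i j = 1)
    (hdeg : ∀ i, 0 < ∑ j, A i j)
    (X : Matrix (Fin n) (Fin d) ℝ)
    (W₁ : Matrix (Fin d) (Fin d') ℝ)
    (W₂ : Matrix (Fin d') (Fin d') ℝ)
    (hW₂nonneg : ∀ q j, 0 ≤ W₂ q j)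
    (hW₂col : ∀ j, ∑ q, W₂ q j < 1) :
    ∃ Xt : Matrix (Fin n) (Fin d') ℝ,
      (Xt = X * W₁ + (Matrix.diagonal fun i => (∑ j, A i j)⁻¹) * A * Xt * W₂) ∧
      (∀ Y : Matrix (Fin n) (Fin d') ℝ,
        Y = X * W₁ + (Matrix.diagonal fun i => (∑ j, A i j)⁻¹) * A * Y * W₂ → Y = Xt) ∧
      (∀ X0 : Matrix (Fin n) (Fin d') ℝ,
        Tendsto
          (fun t => (fun Z : Matrix (Fin n) (Fin d') ℝ =>
            X * W₁ + (Matrix.diagonal fun i => (∑ j, A i j)⁻¹) * A * Z * W₂)^[t] X0)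
          atTop (𝓝 Xt)) := by
  set P : Matrix (Fin n) (Fin n) ℝ := (Matrix.diagonal fun i => (∑ j, A i j)⁻¹) * A with hPdef
  set f : Matrix (Fin n) (Fin d') ℝ → Matrix (Fin n) (Fin d') ℝ :=
    fun Z => X * W₁ + P * Z * W₂ with hfdef
  have hPentry : ∀ i k, P i k = (∑ j, A i j)⁻¹ * A i k := by
    intro i k
    simp [hPdef, Matrix.diagonal_mul]
  have hPnn : ∀ i k, 0 ≤ P i k := by
    intro i k
    rw [hPentry]
    have h1 : 0 ≤ A i k := by rcases hA01 i k with h | h <;> simp [h]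
    exact mul_nonneg (inv_nonneg.2 (hdeg i).le) h1
  have hProw : ∀ i, ∑ k, P i k = 1 := by
    intro i
    simp only [hPentry]
    rw [← Finset.mul_sum, inv_mul_cancel₀ (hdeg i).ne']
  -- the contraction constant
  set K : NNReal := Finset.univ.sup fun j => (⟨∑ q, W₂ q j, Finset.sum_nonneg fun q _ => hW₂nonneg q j⟩ : NNReal) with hKdef
  have hK1 : K < 1 := by
    rw [hKdef]
    apply Finset.sup_lt_iff (by norm_num : (⊥ : NNReal) < 1) |>.2
    intro j _
    exact_mod_cast hW₂col j
  have hKj : ∀ j, ∑ q, W₂ q j ≤ (K : ℝ) := by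
    intro j
    exact_mod_cast (Finset.le_sup (f := fun j => (⟨∑ q, W₂ q j, Finset.sum_nonneg fun q _ => hW₂nonneg q j⟩ : NNReal)) (Finset.mem_univ j) : _ ≤ K)
  have hlip : LipschitzWith K f := by
    apply LipschitzWith.of_dist_le_mul
    intro Z Y
    have hd0 : 0 ≤ (K : ℝ) * dist Z Y := by positivity
    refine (dist_pi_le_iff hd0).2 ?_
    intro i
    refine (dist_pi_le_iff hd0).2 ?_
    intro j
    have hZYe : ∀ k q, |Z k q - Y k q| ≤ dist Z Y := by
      intro k q
      have := le_trans (dist_le_pi_dist (Z k) (Y k) q) (dist_le_pi_dist Z Y k)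
      rwa [Real.dist_eq] at this
    have key : f Z i j - f Y i j = ∑ q, (∑ k, P i k * (Z k q - Y k q)) * W₂ q j := by
      simp only [hfdef, Matrix.add_apply, Matrix.mul_apply]
      rw [add_sub_add_left_eq_sub, ← Finset.sum_sub_distrib]
      refine Finset.sum_congr rfl fun q _ => ?_
      rw [← sub_mul, ← Finset.sum_sub_distrib]
      exact congrArg (· * W₂ q j) (Finset.sum_congr rfl fun k _ => by ring)
    rw [Real.dist_eq, key]
    calc |∑ q, (∑ k, P i k * (Z k q - Y k q)) * W₂ q j|
        ≤ ∑ q, |∑ k, P i k * (Z k q - Y k q)| * W₂ q j := by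
          refine (Finset.abs_sum_le_sum_abs _ _).trans ?_
          apply Finset.sum_le_sum
          intro q _
          rw [abs_mul, abs_of_nonneg (hW₂nonneg q j)]
      _ ≤ ∑ q, dist Z Y * W₂ q j := by
          apply Finset.sum_le_sum
          intro q _
          apply mul_le_mul_of_nonneg_right _ (hW₂nonneg q j)
          calc |∑ k, P i k * (Z k q - Y k q)|
              ≤ ∑ k, |P i k * (Z k q - Y k q)| := Finset.abs_sum_le_sum_abs _ _
            _ ≤ ∑ k, P i k * dist Z Y := by
                apply Finset.sum_le_sum
                intro k _
                rw [abs_mul, abs_of_nonneg (hPnn i k)]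
                exact mul_le_mul_of_nonneg_left (hZYe k q) (hPnn i k)
            _ = dist Z Y := by rw [← Finset.sum_mul, hProw, one_mul]
      _ = dist Z Y * ∑ q, W₂ q j := by rw [← Finset.mul_sum]
      _ ≤ dist Z Y * K := mul_le_mul_of_nonneg_left (hKj j) dist_nonneg
      _ = K * dist Z Y := mul_comm _ _
  have hC : ContractingWith K f := ⟨hK1, hlip⟩
  haveI : @CompleteSpace (Matrix (Fin n) (Fin d') ℝ) PseudoMetricSpace.toUniformSpace := (inferInstance : CompleteSpace (Fin n → Fin d' → ℝ))
  refine ⟨hC.fixedPoint f, ?_, ?_, ?_⟩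
  · exact (hC.fixedPoint_isFixedPt).symm
  · intro Y hY
    exact hC.fixedPoint_unique hY.symm
  · intro X0
    exact hC.tendsto_iterate_fixedPoint X0
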